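/- In the symmetric group on {1,…,15}, let σ := (8 9)(10 11)(12 13)(14 15), ρ := (1 9 8)(2 15 14)(4 12 13)(6 10 11), and ω := (1 4)(2 14 7 15)(3 10 6 11)(8 9 13 12) (unlisted points are fixed). Then the orbits of the subgroup ⟨σ, ρ, ω⟩ on {1,…,15} are exactly {1,4,8,9,12,13}, {2,7,14,15}, {3,6,10,11}, and {5}. -/

import Mathlib

private def cls (n : ℕ) : ℕ :=
  if n = 1 ∨ n = 4 ∨ n = 8 ∨ n = 9 ∨ n = 12 ∨ n = 13 then 1
  else if n = 2 ∨ n = 7 ∨ n = 14 ∨ n = 15 then 2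
  else if n = 3 ∨ n = 6 ∨ n = 10 ∨ n = 11 then 3
  else if n = 5 then 4 else 0

private lemma cls_swap {a b : ℕ} (h : cls a = cls b) (n : ℕ) :
    cls (Equiv.swap a b n) = cls n := by
  rcases eq_or_ne n a with rfl | ha
  · rw [Equiv.swap_apply_left, ← h]
  rcases eq_or_ne n b with rfl | hb
  · rw [Equiv.swap_apply_right, h]
  · rw [Equiv.swap_apply_of_ne_of_ne ha hb]

private def σ0 : Equiv.Perm ℕ :=
  Equiv.swap 8 9 * Equiv.swap 10 11 * Equiv.swap 12 13 * Equiv.swap 14 15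
private def ρ0 : Equiv.Perm ℕ :=
  (Equiv.swap 1 9 * Equiv.swap 9 8) * (Equiv.swap 2 15 * Equiv.swap 15 14) *
  (Equiv.swap 4 12 * Equiv.swap 12 13) * (Equiv.swap 6 10 * Equiv.swap 10 11)
private def ω0 : Equiv.Perm ℕ :=
  Equiv.swap 1 4 * (Equiv.swap 2 14 * Equiv.swap 14 7 * Equiv.swap 7 15) *
  (Equiv.swap 3 10 * Equiv.swap 10 6 * Equiv.swap 6 11) *
  (Equiv.swap 8 9 * Equiv.swap 9 13 * Equiv.swap 13 12)

private lemma cls_σ0 (n : ℕ) : cls (σ0 n) = cls n := by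
  simp only [σ0, Equiv.Perm.mul_apply]
  rw [cls_swap (by decide), cls_swap (by decide), cls_swap (by decide),
    cls_swap (by decide)]

private lemma cls_ρ0 (n : ℕ) : cls (ρ0 n) = cls n := by
  simp only [ρ0, Equiv.Perm.mul_apply]
  rw [cls_swap (by decide), cls_swap (by decide), cls_swap (by decide),
    cls_swap (by decide), cls_swap (by decide), cls_swap (by decide),
    cls_swap (by decide), cls_swap (by decide)]

private lemma cls_ω0 (n : ℕ) : cls (ω0 n) = cls n := by
  simp only [ω0, Equiv.Perm.mul_apply]
  rw [cls_swap (by decide), cls_swap (by decide), cls_swap (by decide),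
    cls_swap (by decide), cls_swap (by decide), cls_swap (by decide),
    cls_swap (by decide), cls_swap (by decide), cls_swap (by decide),
    cls_swap (by decide)]

private lemma cls_closure {g : Equiv.Perm ℕ}
    (hg : g ∈ Subgroup.closure ({σ0, ρ0, ω0} : Set (Equiv.Perm ℕ))) (n : ℕ) :
    cls (g n) = cls n := by
  induction hg using Subgroup.closure_induction generalizing n with
  | mem x hx =>
      rcases hx with rfl | rfl | rfl
      · exact cls_σ0 n
      · exact cls_ρ0 n
      · exact cls_ω0 n
  | one => rfl
  | mul x y hx hy ihx ihy =>
      rw [Equiv.Perm.mul_apply, ihx, ihy]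
  | inv x hx ih =>
      have h2 := ih (x⁻¹ n)
      rw [← Equiv.Perm.mul_apply, mul_inv_cancel, Equiv.Perm.one_apply] at h2
      exact h2.symm

private abbrev G0 : Subgroup (Equiv.Perm ℕ) :=
  Subgroup.closure ({σ0, ρ0, ω0} : Set (Equiv.Perm ℕ))

private lemma mem_orbit_of (g : Equiv.Perm ℕ) (hg : g ∈ G0) {x y : ℕ}
    (h : g x = y) : y ∈ MulAction.orbit G0 x :=
  ⟨⟨g, hg⟩, h⟩

private lemma hσ : σ0 ∈ G0 := Subgroup.subset_closure (by simp)
private lemma hρ : ρ0 ∈ G0 := Subgroup.subset_closure (by simp)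
private lemma hω : ω0 ∈ G0 := Subgroup.subset_closure (by simp)

private lemma orbit_sub (x : ℕ) :
    MulAction.orbit G0 x ⊆ {y | cls y = cls x} := by
  rintro y ⟨⟨g, hg⟩, rfl⟩
  exact cls_closure hg x

private lemma orbit1 : MulAction.orbit G0 1 = ({1, 4, 8, 9, 12, 13} : Set ℕ) := by
  apply Set.Subset.antisymm
  · intro y hy
    have h : cls y = cls 1 := orbit_sub 1 hy
    rw [show cls 1 = 1 from by decide] at h
    unfold cls at h
    simp only [Set.mem_insert_iff, Set.mem_singleton_iff]
    split_ifs at h with h1 h2 h3 h4 <;> first | (exact h1) | omega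
  · intro y hy
    simp only [Set.mem_insert_iff, Set.mem_singleton_iff] at hy
    rcases hy with rfl | rfl | rfl | rfl | rfl | rfl
    · exact MulAction.mem_orbit_self 1
    · exact mem_orbit_of ω0 hω (by decide)
    · exact mem_orbit_of (ρ0 * ρ0) (mul_mem hρ hρ) (by decide)
    · exact mem_orbit_of ρ0 hρ (by decide)
    · exact mem_orbit_of (σ0 * ω0 * ρ0) (mul_mem (mul_mem hσ hω) hρ) (by decide)
    · exact mem_orbit_of (ω0 * ρ0) (mul_mem hω hρ) (by decide)

private lemma orbit2 : MulAction.orbit G0 2 = ({2, 7, 14, 15} : Set ℕ) := by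
  apply Set.Subset.antisymm
  · intro y hy
    have h : cls y = cls 2 := orbit_sub 2 hy
    rw [show cls 2 = 2 from by decide] at h
    unfold cls at h
    simp only [Set.mem_insert_iff, Set.mem_singleton_iff]
    split_ifs at h with h1 h2 h3 h4 <;> first | (exact h2) | omega
  · intro y hy
    simp only [Set.mem_insert_iff, Set.mem_singleton_iff] at hy
    rcases hy with rfl | rfl | rfl | rfl
    · exact MulAction.mem_orbit_self 2
    · exact mem_orbit_of (ω0 * ω0) (mul_mem hω hω) (by decide)
    · exact mem_orbit_of ω0 hω (by decide)
    · exact mem_orbit_of (ω0 * ω0 * ω0) (mul_mem (mul_mem hω hω) hω) (by decide)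

private lemma orbit3 : MulAction.orbit G0 3 = ({3, 6, 10, 11} : Set ℕ) := by
  apply Set.Subset.antisymm
  · intro y hy
    have h : cls y = cls 3 := orbit_sub 3 hy
    rw [show cls 3 = 3 from by decide] at h
    unfold cls at h
    simp only [Set.mem_insert_iff, Set.mem_singleton_iff]
    split_ifs at h with h1 h2 h3 h4 <;> first | (exact h3) | omega
  · intro y hy
    simp only [Set.mem_insert_iff, Set.mem_singleton_iff] at hy
    rcases hy with rfl | rfl | rfl | rfl
    · exact MulAction.mem_orbit_self 3
    · exact mem_orbit_of (ω0 * ω0) (mul_mem hω hω) (by decide)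
    · exact mem_orbit_of ω0 hω (by decide)
    · exact mem_orbit_of (ω0 * ω0 * ω0) (mul_mem (mul_mem hω hω) hω) (by decide)

private lemma orbit5 : MulAction.orbit G0 5 = ({5} : Set ℕ) := by
  apply Set.Subset.antisymm
  · intro y hy
    have h : cls y = cls 5 := orbit_sub 5 hy
    rw [show cls 5 = 4 from by decide] at h
    unfold cls at h
    simp only [Set.mem_singleton_iff]
    split_ifs at h with h1 h2 h3 h4 <;> first | (exact h4) | omega
  · intro y hy
    simp only [Set.mem_singleton_iff] at hy
    rcases hy with rfl
    exact MulAction.mem_orbit_self 5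

private lemma orbit_eq_of_mem {x y : ℕ} (h : y ∈ MulAction.orbit G0 x) :
    MulAction.orbit G0 y = MulAction.orbit G0 x :=
  MulAction.orbit_eq_iff.mpr h

theorem typeVI_reduced_automorphism_orbits :
    let σ : Equiv.Perm ℕ :=
      Equiv.swap 8 9 * Equiv.swap 10 11 * Equiv.swap 12 13 * Equiv.swap 14 15
    let ρ : Equiv.Perm ℕ :=
      (Equiv.swap 1 9 * Equiv.swap 9 8) * (Equiv.swap 2 15 * Equiv.swap 15 14) *
      (Equiv.swap 4 12 * Equiv.swap 12 13) * (Equiv.swap 6 10 * Equiv.swap 10 11)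
    let ω : Equiv.Perm ℕ :=
      Equiv.swap 1 4 * (Equiv.swap 2 14 * Equiv.swap 14 7 * Equiv.swap 7 15) *
      (Equiv.swap 3 10 * Equiv.swap 10 6 * Equiv.swap 6 11) *
      (Equiv.swap 8 9 * Equiv.swap 9 13 * Equiv.swap 13 12)
    {S : Set ℕ | ∃ x ∈ Set.Icc 1 15,
        S = MulAction.orbit (Subgroup.closure ({σ, ρ, ω} : Set (Equiv.Perm ℕ))) x} =
      {{1, 4, 8, 9, 12, 13}, {2, 7, 14, 15}, {3, 6, 10, 11}, {5}} := by
  intro σ ρ ω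
  show {S : Set ℕ | ∃ x ∈ Set.Icc 1 15, S = MulAction.orbit G0 x} = _
  ext S
  simp only [Set.mem_setOf_eq, Set.mem_insert_iff, Set.mem_singleton_iff,
    Set.mem_Icc]
  constructor
  · rintro ⟨x, ⟨hx1, hx15⟩, rfl⟩
    interval_cases x
    · left; exact orbit1
    · right; left; exact orbit2
    · right; right; left; exact orbit3
    · left; rw [orbit_eq_of_mem (by rw [orbit1]; simp)]; exact orbit1
    · right; right; right; exact orbit5
    · right; right; left; rw [orbit_eq_of_mem (by rw [orbit3]; simp)]; exact orbit3
    · right; left; rw [orbit_eq_of_mem (by rw [orbit2]; simp)]; exact orbit2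
    · left; rw [orbit_eq_of_mem (by rw [orbit1]; simp)]; exact orbit1
    · left; rw [orbit_eq_of_mem (by rw [orbit1]; simp)]; exact orbit1
    · right; right; left; rw [orbit_eq_of_mem (by rw [orbit3]; simp)]; exact orbit3
    · right; right; left; rw [orbit_eq_of_mem (by rw [orbit3]; simp)]; exact orbit3
    · left; rw [orbit_eq_of_mem (by rw [orbit1]; simp)]; exact orbit1
    · left; rw [orbit_eq_of_mem (by rw [orbit1]; simp)]; exact orbit1
    · right; left; rw [orbit_eq_of_mem (by rw [orbit2]; simp)]; exact orbit2
    · right; left; rw [orbit_eq_of_mem (by rw [orbit2]; simp)]; exact orbit2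
  · rintro (rfl | rfl | rfl | rfl)
    · exact ⟨1, by norm_num, orbit1.symm⟩
    · exact ⟨2, by norm_num, orbit2.symm⟩
    · exact ⟨3, by norm_num, orbit3.symm⟩
    · exact ⟨5, by norm_num, orbit5.symm⟩
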